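/- For any lattice L of full rank in ℝ^m, there exists ε(L) > 0 such that: if F ∈ GL(m, ℝ) satisfies F L F^{-1} = L (i.e. F maps L bijectively onto L) and |⟨F(X), F(Y)⟩ − ⟨X, Y⟩| ≤ ε(L)‖X‖‖Y‖ for all X, Y ∈ ℝ^m, then F is orthogonal. -/

import Mathlib

open Submodule Metric

private theorem aux_finset {E : Type*} [NormedAddCommGroup E] [InnerProductSpace ℝ E]
    (B : Finset (E ≃ₗ[ℝ] E))
    (h : ∀ F ∈ B, ∃ X Y : E, (inner ℝ (F X) (F Y) : ℝ) ≠ (inner ℝ X Y : ℝ)) :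
    ∃ ε : ℝ, 0 < ε ∧ ∀ F ∈ B, ∃ X Y : E,
      ε * ‖X‖ * ‖Y‖ < |(inner ℝ (F X) (F Y) : ℝ) - (inner ℝ X Y : ℝ)| := by
  classical
  induction B using Finset.induction_on with
  | empty => exact ⟨1, one_pos, by simp⟩
  | @insert F B' hFB ih =>
    obtain ⟨ε, hε, hB⟩ := ih (fun G hG => h G (Finset.mem_insert_of_mem hG))
    obtain ⟨X, Y, hXY⟩ := h F (Finset.mem_insert_self _ _)
    have hΔ : (0 : ℝ) < |(inner ℝ (F X) (F Y) : ℝ) - (inner ℝ X Y : ℝ)| := by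
      rw [abs_pos, sub_ne_zero]; exact hXY
    have hX : X ≠ 0 := by
      rintro rfl; simp at hXY
    have hY : Y ≠ 0 := by
      rintro rfl; simp at hXY
    have hXn : (0 : ℝ) < ‖X‖ := norm_pos_iff.mpr hX
    have hYn : (0 : ℝ) < ‖Y‖ := norm_pos_iff.mpr hY
    set Δ := |(inner ℝ (F X) (F Y) : ℝ) - (inner ℝ X Y : ℝ)|
    set εF : ℝ := Δ / (2 * ‖X‖ * ‖Y‖) with hεF
    have hεFpos : 0 < εF := div_pos hΔ (by positivity)
    refine ⟨min ε εF, lt_min hε hεFpos, ?_⟩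
    intro G hG
    rcases Finset.mem_insert.mp hG with rfl | hG'
    · refine ⟨X, Y, ?_⟩
      have h1 : min ε εF * ‖X‖ * ‖Y‖ ≤ εF * ‖X‖ * ‖Y‖ :=
        mul_le_mul_of_nonneg_right
          (mul_le_mul_of_nonneg_right (min_le_right ε εF) hXn.le) hYn.le
      have h2 : εF * ‖X‖ * ‖Y‖ < Δ := by
        rw [hεF, div_mul_eq_mul_div, div_mul_eq_mul_div, div_lt_iff₀ (by positivity)]
        nlinarith [mul_pos (mul_pos hΔ hXn) hYn]
      exact lt_of_le_of_lt h1 h2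
    · obtain ⟨X', Y', hX'Y'⟩ := hB G hG'
      refine ⟨X', Y', lt_of_le_of_lt ?_ hX'Y'⟩
      have := min_le_left ε εF
      nlinarith [norm_nonneg X', norm_nonneg Y', mul_nonneg (norm_nonneg X') (norm_nonneg Y')]

/-- For any full-rank lattice `L ⊆ ℝ^m` (generated by a basis `b`),
there is `ε(L) > 0` such that every linear automorphism `F` preserving `L` and
satisfying `|⟨FX, FY⟩ − ⟨X, Y⟩| ≤ ε‖X‖‖Y‖` for all `X, Y` is orthogonal. -/
theorem stmt2 (m : ℕ) (b : Module.Basis (Fin m) ℝ (EuclideanSpace ℝ (Fin m))) :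
    ∃ ε : ℝ, 0 < ε ∧
      ∀ F : EuclideanSpace ℝ (Fin m) ≃ₗ[ℝ] EuclideanSpace ℝ (Fin m),
        (∀ x, x ∈ AddSubgroup.closure (Set.range ⇑b) ↔
              F x ∈ AddSubgroup.closure (Set.range ⇑b)) →
        (∀ X Y, |(inner ℝ (F X) (F Y) : ℝ) - (inner ℝ X Y : ℝ)| ≤ ε * ‖X‖ * ‖Y‖) →
        ∀ X Y, (inner ℝ (F X) (F Y) : ℝ) = (inner ℝ X Y : ℝ) := by
  classical
  set E := EuclideanSpace ℝ (Fin m)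
  set L : Submodule ℤ E := Submodule.span ℤ (Set.range ⇑b) with hLdef
  have hmem : ∀ x : E, x ∈ AddSubgroup.closure (Set.range ⇑b) ↔ x ∈ L := by
    intro x
    rw [← Submodule.span_int_eq_addSubgroupClosure]
    rfl
  set R : ℝ := 2 * ∑ i, ‖b i‖ with hR
  -- lattice points in the closed ball are finite
  have hdisc : DiscreteTopology L.toAddSubgroup := by rw [hLdef]; infer_instance
  have hclosed : IsClosed (L : Set E) := by
    have : IsClosed ((L.toAddSubgroup : AddSubgroup E) : Set E) :=
      @AddSubgroup.isClosed_of_discrete E _ _ _ _ L.toAddSubgroup hdisc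
    exact this
  haveI hdisc2 : DiscreteTopology ↥(L : Set E) := hdisc
  have hfinT : (Metric.closedBall (0 : E) R ∩ (L : Set E)).Finite :=
    Metric.finite_isBounded_inter_isClosed DiscreteTopology.isDiscrete Metric.isBounded_closedBall hclosed
  -- the set of candidate maps is finite
  set S : Set (E ≃ₗ[ℝ] E) :=
    {F | ∀ i, F (b i) ∈ Metric.closedBall (0 : E) R ∩ (L : Set E)} with hSdef
  have hSfin : S.Finite := by
    have himg : ((fun F : E ≃ₗ[ℝ] E => fun i => F (b i)) '' S).Finite := by
      refine Set.Finite.subset (Set.Finite.pi (fun _ : Fin m => hfinT)) ?_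
      rintro _ ⟨F, hF, rfl⟩
      intro i _
      exact hF i
    refine Set.Finite.of_finite_image himg ?_
    intro F hF G hG h
    apply LinearEquiv.toLinearMap_injective
    exact b.ext (fun i => congrFun h i)
  set Bad : Set (E ≃ₗ[ℝ] E) :=
    {F ∈ S | ∃ X Y : E, (inner ℝ (F X) (F Y) : ℝ) ≠ (inner ℝ X Y : ℝ)} with hBdef
  have hBadfin : Bad.Finite := hSfin.subset (fun F hF => hF.1)
  obtain ⟨ε₀, hε₀, hbad⟩ := aux_finset hBadfin.toFinset
    (fun F hF => ((Set.Finite.mem_toFinset _).mp hF).2)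
  refine ⟨min (1/2) ε₀, lt_min (by norm_num) hε₀, ?_⟩
  intro F hlat hbnd
  have hεhalf : min (1/2 : ℝ) ε₀ ≤ 1/2 := min_le_left _ _
  have hεε₀ : min (1/2 : ℝ) ε₀ ≤ ε₀ := min_le_right _ _
  have hFS : F ∈ S := by
    intro i
    constructor
    · -- norm bound
      rw [Metric.mem_closedBall, dist_zero_right]
      have h1 := hbnd (b i) (b i)
      have h2 : (inner ℝ (F (b i)) (F (b i)) : ℝ) = ‖F (b i)‖ ^ 2 :=
        real_inner_self_eq_norm_sq _
      have h3 : (inner ℝ (b i) (b i) : ℝ) = ‖b i‖ ^ 2 := real_inner_self_eq_norm_sq _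
      have h4 : ‖F (b i)‖ ^ 2 ≤ (3/2) * ‖b i‖ ^ 2 := by
        rw [h2, h3] at h1
        have habs := abs_le.mp h1
        nlinarith [norm_nonneg (b i), mul_nonneg (norm_nonneg (b i)) (norm_nonneg (b i))]
      have h5 : ‖b i‖ ≤ ∑ j, ‖b j‖ :=
        Finset.single_le_sum (f := fun j => ‖b j‖) (fun j _ => norm_nonneg _)
          (Finset.mem_univ i)
      have h6 : (0:ℝ) ≤ ∑ j, ‖b j‖ := Finset.sum_nonneg (fun j _ => norm_nonneg _)
      rw [hR]
      nlinarith [norm_nonneg (F (b i)), norm_nonneg (b i)]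
    · -- lattice membership
      have hb : b i ∈ AddSubgroup.closure (Set.range ⇑b) :=
        AddSubgroup.subset_closure (Set.mem_range_self i)
      exact (hmem _).mp ((hlat (b i)).mp hb)
  intro X Y
  by_contra hne
  have hFBad : F ∈ Bad := ⟨hFS, X, Y, hne⟩
  obtain ⟨X', Y', hX'Y'⟩ := hbad F ((Set.Finite.mem_toFinset _).mpr hFBad)
  have h1 := hbnd X' Y'
  have h2 : min (1/2 : ℝ) ε₀ * ‖X'‖ * ‖Y'‖ ≤ ε₀ * ‖X'‖ * ‖Y'‖ := by
    nlinarith [norm_nonneg X', norm_nonneg Y', mul_nonneg (norm_nonneg X') (norm_nonneg Y')]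
  have := hX'Y'
  -- hX'Y' : ε₀ * ‖X'‖ * ‖Y'‖ < |...| ; h1 : |...| ≤ min * ... ≤ ε₀ * ...
  linarith
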